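/- arXiv:1005.5604 — 2 statements merged into one kernel-verified Lean document; each statement's English description precedes it below -/
import Mathlib

section
/- Quantitative surjectivity: under the hypotheses |v|_{s+2σ} < σ with v ∈ 𝒜(𝕋ⁿ_{s+2σ}, ℂⁿ), for every y ∈ ℝⁿ_s = ℝⁿ × i[−s,s]ⁿ there exists a unique x ∈ ℝⁿ_{s+σ} with x + v(p x) = y, where p is the covering projection; i.e. the map x ↦ y − v(p x) is a contraction of ℝⁿ_{s+σ} with a unique fixed point. -/
/-- The closed strip of width `r` in `ℂⁿ` (lift of `𝕋ⁿ_r`). -/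
def strip (n : ℕ) (r : ℝ) : Set (Fin n → ℂ) := {z | ∀ j, |(z j).im| ≤ r}

/-- The open strip of width `r` (interior of `strip n r`). -/
def ostrip (n : ℕ) (r : ℝ) : Set (Fin n → ℂ) := {z | ∀ j, |(z j).im| < r}

lemma strip_isClosed (n : ℕ) (r : ℝ) : IsClosed (strip n r) := by
  have : strip n r = ⋂ j, (fun z : Fin n → ℂ => |(z j).im|) ⁻¹' Set.Iic r := by
    ext z; simp [strip]
  rw [this]
  exact isClosed_iInter fun j =>
    IsClosed.preimage (by fun_prop) isClosed_Iic

lemma strip_convex (n : ℕ) (r : ℝ) : Convex ℝ (strip n r) := by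
  intro z hz w hw a b ha hb hab j
  have : ((a • z + b • w) j).im = a * (z j).im + b * (w j).im := by
    simp [Complex.add_im, Complex.smul_im]
  rw [this]
  calc |a * (z j).im + b * (w j).im| ≤ |a * (z j).im| + |b * (w j).im| := abs_add_le _ _
    _ = a * |(z j).im| + b * |(w j).im| := by
        rw [abs_mul, abs_mul, abs_of_nonneg ha, abs_of_nonneg hb]
    _ ≤ a * r + b * r := by
        gcongr
        · exact hz j
        · exact hw j
    _ = r := by rw [← add_mul, hab, one_mul]

/-- Quantitative surjectivity: if `v ∈ 𝒜(𝕋ⁿ_{s+2σ}, ℂⁿ)` with sup norm `< σ`, then for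
every `y ∈ ℝⁿ × i[-s,s]ⁿ` there is a unique `x ∈ ℝⁿ × i[-s-σ, s+σ]ⁿ` with
`x + v(x) = y`. -/
theorem stmt_10 (n : ℕ) (s σ : ℝ) (hs : 0 ≤ s) (hσ : 0 < σ)
    (v : (Fin n → ℂ) → (Fin n → ℂ))
    (hv₁ : ContinuousOn v (strip n (s + 2 * σ)))
    (hv₂ : DifferentiableOn ℂ v (ostrip n (s + 2 * σ)))
    (hper : ∀ (z : Fin n → ℂ) (j : Fin n),
      v (Function.update z j (z j + 2 * Real.pi)) = v z)
    (M : ℝ) (hMσ : M < σ)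
    (hM : ∀ z ∈ strip n (s + 2 * σ), ∀ j, ‖v z j‖ ≤ M) :
    ∀ y ∈ strip n s, ∃! x : Fin n → ℂ, x ∈ strip n (s + σ) ∧ x + v x = y := by
  -- replace M by max M 0
  set M' : ℝ := max M 0 with hM'def
  have hM'0 : 0 ≤ M' := le_max_right _ _
  have hM'σ : M' < σ := max_lt hMσ hσ
  have hM' : ∀ z ∈ strip n (s + 2 * σ), ∀ j, ‖v z j‖ ≤ M' :=
    fun z hz j => (hM z hz j).trans (le_max_left _ _)
  -- radius r between M' and σ
  set r : ℝ := (M' + σ) / 2 with hrdef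
  have hr0 : 0 < r := by positivity
  have hM'r : M' < r := by simp only [hrdef]; linarith
  have hrσ : r < σ := by simp only [hrdef]; linarith
  -- strip inclusions
  have hsub : strip n (s + σ) ⊆ strip n (s + 2 * σ) := by
    intro z hz j; exact (hz j).trans (by linarith)
  have hsub' : strip n (s + σ) ⊆ ostrip n (s + 2 * σ) := by
    intro z hz j; exact lt_of_le_of_lt (hz j) (by linarith)
  have hopen : IsOpen (ostrip n (s + 2 * σ)) := by
    have : ostrip n (s + 2 * σ) = ⋂ j, (fun z : Fin n → ℂ => |(z j).im|) ⁻¹' Set.Iio (s + 2 * σ) := by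
      ext z; simp [ostrip]
    rw [this]
    exact isOpen_iInter_of_finite fun j => IsOpen.preimage (by fun_prop) isOpen_Iio
  -- differentiability at points of the middle strip
  have hdiff : ∀ x ∈ strip n (s + σ), DifferentiableAt ℂ v x := fun x hx =>
    hv₂.differentiableAt (hopen.mem_nhds (hsub' hx))
  -- the derivative bound via Cauchy's estimate
  have hfderiv : ∀ x ∈ strip n (s + σ), ‖fderiv ℂ v x‖ ≤ M' / r := by
    intro x hx
    refine ContinuousLinearMap.opNorm_le_bound _ (by positivity) fun w => ?_
    rcases eq_or_ne w 0 with rfl | hw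
    · simp
    have hw0 : 0 < ‖w‖ := norm_pos_iff.2 hw
    set ρ : ℝ := r / ‖w‖ with hρdef
    have hρ0 : 0 < ρ := by positivity
    set g : ℂ → (Fin n → ℂ) := fun t => v (x + t • w) with hgdef
    -- points on the closed ball of radius ρ land in the strips
    have hland : ∀ t : ℂ, ‖t‖ ≤ ρ → (x + t • w) ∈ strip n (s + σ + r) := by
      intro t ht j
      have h1 : |((x + t • w) j).im| ≤ |(x j).im| + |((t • w) j).im| := by
        simpa using abs_add_le ((x j).im) ((t • w) j).im
      have h2 : |((t • w) j).im| ≤ ‖t‖ * ‖w‖ := by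
        have : |((t • w) j).im| ≤ ‖(t • w) j‖ := Complex.abs_im_le_norm _
        refine this.trans ?_
        have : ‖(t • w) j‖ = ‖t‖ * ‖w j‖ := by
          simp [Pi.smul_apply, norm_smul]
        rw [this]
        exact mul_le_mul_of_nonneg_left (norm_le_pi_norm w j) (norm_nonneg t)
      have h3 : ‖t‖ * ‖w‖ ≤ r := by
        calc ‖t‖ * ‖w‖ ≤ ρ * ‖w‖ := by gcongr
          _ = r := by rw [hρdef]; field_simp
      have := hx j
      calc |((x + t • w) j).im| ≤ |(x j).im| + ‖t‖ * ‖w‖ := h1.trans (by linarith)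
        _ ≤ (s + σ) + r := add_le_add (hx j) h3
        _ = s + σ + r := rfl
    have hlandsub : ∀ z ∈ strip n (s + σ + r), z ∈ strip n (s + 2 * σ) := by
      intro z hz j; exact (hz j).trans (by linarith)
    have hlandsub' : ∀ z ∈ strip n (s + σ + r), z ∈ ostrip n (s + 2 * σ) := by
      intro z hz j; exact lt_of_le_of_lt (hz j) (by linarith)
    -- g is differentiable on the closed ball
    have hgdiff : ∀ t ∈ Metric.closedBall (0 : ℂ) ρ, DifferentiableAt ℂ g t := by
      intro t ht
      have h1 : DifferentiableAt ℂ (fun t : ℂ => x + t • w) t := by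
        apply DifferentiableAt.const_add
        exact (differentiableAt_id.smul_const w)
      have h2 : DifferentiableAt ℂ v (x + t • w) := by
        apply hv₂.differentiableAt
        apply hopen.mem_nhds
        apply hlandsub'
        apply hland
        simpa [Metric.mem_closedBall, dist_eq_norm] using ht
      exact h2.comp t h1
    have hgd : DiffContOnCl ℂ g (Metric.ball (0 : ℂ) ρ) := by
      constructor
      · exact fun t ht => (hgdiff t (Metric.ball_subset_closedBall ht)).differentiableWithinAt
      · rw [closure_ball (0 : ℂ) hρ0.ne']
        exact fun t ht => (hgdiff t ht).continuousAt.continuousWithinAt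
    -- derivative of g at 0 is (fderiv v x) w
    have hDg : HasDerivAt g ((fderiv ℂ v x) w) 0 := by
      have hL : HasDerivAt (fun t : ℂ => x + t • w) w 0 := by
        simpa using ((hasDerivAt_id (0 : ℂ)).smul_const w).const_add x
      have hD : HasFDerivAt v (fderiv ℂ v x) (x + (0 : ℂ) • w) := by
        simpa using (hdiff x hx).hasFDerivAt
      exact hD.comp_hasDerivAt 0 hL
    -- bound on the sphere
    have hbound : ∀ t ∈ Metric.sphere (0 : ℂ) ρ, ‖g t‖ ≤ M' := by
      intro t ht
      have ht' : ‖t‖ = ρ := by simpa [Metric.mem_sphere, dist_eq_norm] using ht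
      have hmem : (x + t • w) ∈ strip n (s + 2 * σ) :=
        hlandsub _ (hland t ht'.le)
      rw [pi_norm_le_iff_of_nonneg hM'0]
      exact fun j => hM' _ hmem j
    have := Complex.norm_deriv_le_of_forall_mem_sphere_norm_le hρ0 hgd hbound
    rw [hDg.deriv] at this
    calc ‖(fderiv ℂ v x) w‖ ≤ M' / ρ := this
      _ = M' / r * ‖w‖ := by rw [hρdef]; field_simp
  -- Lipschitz constant
  set K : NNReal := ⟨M' / r, by positivity⟩ with hKdef
  have hK1 : K < 1 := by
    rw [← NNReal.coe_lt_coe]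
    show M' / r < 1
    rw [div_lt_one hr0]
    exact hM'r
  have hlip : LipschitzOnWith K v (strip n (s + σ)) := by
    apply Convex.lipschitzOnWith_of_nnnorm_fderiv_le hdiff _ (strip_convex n (s + σ))
    intro x hx
    rw [← NNReal.coe_le_coe, coe_nnnorm]
    exact hfderiv x hx
  -- the fixed point argument
  intro y hy
  have hmaps : ∀ x ∈ strip n (s + σ), (y - v x) ∈ strip n (s + σ) := by
    intro x hx j
    have h1 : |(y j).im| ≤ s := hy j
    have h2 : ‖v x j‖ ≤ M' := hM' x (hsub hx) j
    have h3 : |(v x j).im| ≤ M' := (Complex.abs_im_le_norm _).trans h2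
    have : ((y - v x) j).im = (y j).im - (v x j).im := by simp
    rw [this]
    calc |(y j).im - (v x j).im| ≤ |(y j).im| + |(v x j).im| := abs_sub _ _
      _ ≤ s + M' := add_le_add h1 h3
      _ ≤ s + σ := by linarith
  -- work in the subtype
  haveI : CompleteSpace (strip n (s + σ)) := (strip_isClosed n (s + σ)).completeSpace_coe
  haveI : Nonempty (strip n (s + σ)) :=
    ⟨⟨0, fun j => by simp; positivity⟩⟩
  set F : (strip n (s + σ)) → (strip n (s + σ)) :=
    fun x => ⟨y - v x, hmaps x x.2⟩ with hFdef
  have hFlip : ContractingWith K F := by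
    refine ⟨hK1, LipschitzWith.of_dist_le_mul fun a b => ?_⟩
    have h1 : dist (F a) (F b) = dist (v a.1) (v b.1) := by
      show dist (y - v a.1) (y - v b.1) = _
      rw [dist_sub_left]
    rw [h1]
    have := hlip.dist_le_mul a.1 a.2 b.1 b.2
    exact this
  set x₀ := hFlip.fixedPoint F with hx₀def
  have hfix : F x₀ = x₀ := hFlip.fixedPoint_isFixedPt
  have hx₀eq : y - v x₀.1 = x₀.1 := congrArg Subtype.val hfix
  refine ⟨x₀.1, ⟨x₀.2, eq_sub_iff_add_eq.mp hx₀eq.symm⟩, ?_⟩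
  rintro z ⟨hz, hzeq⟩
  have hzfix : y - v z = z := (eq_sub_iff_add_eq.mpr hzeq).symm
  have hd : dist z x₀.1 ≤ (K : ℝ) * dist z x₀.1 := by
    calc dist z x₀.1 = dist (y - v z) (y - v x₀.1) := by rw [hzfix, hx₀eq]
      _ = dist (v z) (v x₀.1) := dist_sub_left _ _ _
      _ ≤ (K : ℝ) * dist z x₀.1 := hlip.dist_le_mul z hz x₀.1 x₀.2
  have hK1' : (K : ℝ) < 1 := hK1
  have : dist z x₀.1 ≤ 0 := by nlinarith [dist_nonneg (x := z) (y := x₀.1)]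
  have : dist z x₀.1 = 0 := le_antisymm this dist_nonneg
  exact dist_eq_zero.mp this
end

section
/- Estimate on the inverse diffeomorphism: if v ∈ 𝒜(𝕋ⁿ_{s+2σ}, ℂⁿ) with |v|_{s+2σ} < σ, and ψ : 𝕋ⁿ_s → 𝕋ⁿ_{s+σ} is the (unique) right inverse of the induced map φ = id + v, then |ψ − id|_s ≤ |v|_{s+σ}, and if moreover 2σ^{−1}|v|_{s+2σ} ≤ 1 then |ψ' − id|_s ≤ 2σ^{−1}|v|_{s+2σ}. -/
open Metric Set


lemma isOpen_ostrip (n : ℕ) (r : ℝ) : IsOpen (ostrip n r) := by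
  have : ostrip n r = ⋂ j, {z : Fin n → ℂ | |(z j).im| < r} := by
    ext z; simp [ostrip]
  rw [this]
  exact isOpen_iInter_of_finite fun j =>
    isOpen_lt (continuous_abs.comp (Complex.continuous_im.comp (continuous_apply j)))
      continuous_const

-- Cauchy estimate (directional, sup-norm)
lemma cauchy_dir (n : ℕ) (s σ M₂ : ℝ) (hσ : 0 < σ)
    (v : (Fin n → ℂ) → (Fin n → ℂ))
    (hv₂ : DifferentiableOn ℂ v (ostrip n (s + 2 * σ)))
    (hM₂ : ∀ z ∈ strip n (s + 2 * σ), ∀ j, ‖v z j‖ ≤ M₂)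
    (z₀ : Fin n → ℂ) (hz₀ : z₀ ∈ strip n (s + σ))
    (u : Fin n → ℂ) (hu : ∀ k, ‖u k‖ ≤ 1) (i : Fin n) :
    ‖fderiv ℂ v z₀ u i‖ ≤ M₂ / σ := by
  set f : ℂ → ℂ := fun t => v (z₀ + t • u) i with hf
  have hmem : ∀ t : ℂ, ‖t‖ < σ → (z₀ + t • u) ∈ ostrip n (s + 2 * σ) := by
    intro t ht k
    have h1 : |(z₀ k).im| ≤ s + σ := hz₀ k
    have h2 : |(t * u k).im| ≤ ‖t‖ * ‖u k‖ := by
      calc |(t * u k).im| ≤ ‖t * u k‖ := Complex.abs_im_le_norm _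
        _ = ‖t‖ * ‖u k‖ := norm_mul _ _
    have h3 : ‖t‖ * ‖u k‖ ≤ ‖t‖ * 1 := by
      exact mul_le_mul_of_nonneg_left (hu k) (norm_nonneg t)
    have : |(z₀ k + t * u k).im| ≤ |(z₀ k).im| + |(t * u k).im| := by
      rw [Complex.add_im]; exact abs_add_le _ _
    show |((z₀ + t • u) k).im| < s + 2 * σ
    simp only [Pi.add_apply, Pi.smul_apply, smul_eq_mul]
    nlinarith
  have hd0 : DifferentiableAt ℂ v z₀ := by
    refine hv₂.differentiableAt ((isOpen_ostrip n _).mem_nhds ?_)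
    simpa using hmem 0 (by simpa using hσ)
  have hL : HasDerivAt (fun t : ℂ => z₀ + t • u) u 0 := by
    simpa using ((hasDerivAt_id (0 : ℂ)).smul_const u).const_add z₀
  have hder : HasDerivAt f (fderiv ℂ v z₀ u i) 0 := by
    have h1 : HasDerivAt (fun t : ℂ => v (z₀ + t • u)) (fderiv ℂ v z₀ u) 0 := by
      have h0 : z₀ = z₀ + (0 : ℂ) • u := by simp
      have hF : HasFDerivAt v (fderiv ℂ v z₀) (z₀ + (0 : ℂ) • u) := h0 ▸ hd0.hasFDerivAt
      have := hF.comp_hasDerivAt 0 hL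
      exact this
    have := (ContinuousLinearMap.proj (R := ℂ) (φ := fun _ : Fin n => ℂ)
      i).hasFDerivAt.comp_hasDerivAt 0 h1
    exact this
  have key : ∀ r, 0 < r → r < σ → ‖fderiv ℂ v z₀ u i‖ ≤ M₂ / r := by
    intro r hr hrσ
    have hdiffOn : DifferentiableOn ℂ f (closedBall 0 r) := by
      intro t ht
      have htr : ‖t‖ ≤ r := by simpa using mem_closedBall_zero_iff.mp ht
      have hmemt : (z₀ + t • u) ∈ ostrip n (s + 2 * σ) := hmem t (lt_of_le_of_lt htr hrσ)
      have hvd : DifferentiableAt ℂ v (z₀ + t • u) :=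
        hv₂.differentiableAt ((isOpen_ostrip n _).mem_nhds hmemt)
      have hLd : DifferentiableAt ℂ (fun t : ℂ => z₀ + t • u) t :=
        (differentiableAt_const _).add ((differentiableAt_id).smul_const u)
      exact (((differentiable_apply i).differentiableAt).comp t
        (hvd.comp t hLd)).differentiableWithinAt
    have hcl : DiffContOnCl ℂ f (ball 0 r) :=
      DifferentiableOn.diffContOnCl (by rwa [closure_ball (0 : ℂ) hr.ne'])
    have hbd : ∀ z ∈ sphere (0 : ℂ) r, ‖f z‖ ≤ M₂ := by
      intro t ht
      have htr : ‖t‖ = r := by simpa using mem_sphere_zero_iff_norm.mp ht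
      have : (z₀ + t • u) ∈ strip n (s + 2 * σ) :=
        fun k => (hmem t (htr ▸ hrσ) k).le
      exact hM₂ _ this i
    have := Complex.norm_deriv_le_of_forall_mem_sphere_norm_le hr hcl hbd
    rwa [hder.deriv] at this
  -- pass to the limit r → σ⁻
  set d := ‖fderiv ℂ v z₀ u i‖ with hd
  have hmul : ∀ r ∈ Ioo (0 : ℝ) σ, d * r ≤ M₂ := by
    intro r hr
    have := key r hr.1 hr.2
    calc d * r ≤ (M₂ / r) * r := mul_le_mul_of_nonneg_right this hr.1.le
      _ = M₂ := div_mul_cancel₀ M₂ hr.1.ne'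
  have htend : Filter.Tendsto (fun r => d * r) (nhdsWithin σ (Iio σ)) (nhds (d * σ)) :=
    ((continuous_const.mul continuous_id).tendsto σ).mono_left nhdsWithin_le_nhds
  have hle : d * σ ≤ M₂ := by
    refine le_of_tendsto htend ?_
    filter_upwards [Ioo_mem_nhdsLT hσ]
      with r hr using hmul r hr
  rw [le_div_iff₀ hσ]; exact hle
/-- Estimate on the inverse: if `v ∈ 𝒜(𝕋ⁿ_{s+2σ}, ℂⁿ)` with `|v|_{s+2σ} < σ` and `ψ`
is the right inverse of `φ = id + v`, mapping `𝕋ⁿ_s` into `𝕋ⁿ_{s+σ}`, then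
`|ψ - id|_s ≤ |v|_{s+σ}`, and if moreover `2σ⁻¹|v|_{s+2σ} ≤ 1`, the Jacobian satisfies
`|ψ' - id|_s ≤ 2σ⁻¹|v|_{s+2σ}` (entrywise, i.e. in the max norm on matrices). -/
theorem stmt_11 (n : ℕ) (s σ : ℝ) (hs : 0 ≤ s) (hσ : 0 < σ)
    (v : (Fin n → ℂ) → (Fin n → ℂ))
    (hv₁ : ContinuousOn v (strip n (s + 2 * σ)))
    (hv₂ : DifferentiableOn ℂ v (ostrip n (s + 2 * σ)))
    (hper : ∀ (z : Fin n → ℂ) (j : Fin n),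
      v (Function.update z j (z j + 2 * Real.pi)) = v z)
    (M₁ M₂ : ℝ) (hM₂σ : M₂ < σ)
    (hM₁ : ∀ z ∈ strip n (s + σ), ∀ j, ‖v z j‖ ≤ M₁)
    (hM₂ : ∀ z ∈ strip n (s + 2 * σ), ∀ j, ‖v z j‖ ≤ M₂)
    (ψ : (Fin n → ℂ) → (Fin n → ℂ))
    (hψmap : ∀ y ∈ strip n s, ψ y ∈ strip n (s + σ))
    (hψinv : ∀ y ∈ strip n s, ψ y + v (ψ y) = y)
    (hψdiff : ∀ y ∈ ostrip n s, DifferentiableAt ℂ ψ y) :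
    (∀ y ∈ strip n s, ∀ j, ‖ψ y j - y j‖ ≤ M₁) ∧
    (2 * σ⁻¹ * M₂ ≤ 1 →
      ∀ y ∈ ostrip n s, ∀ i j : Fin n,
        ‖fderiv ℂ ψ y (Pi.single j 1) i - (if i = j then (1 : ℂ) else 0)‖
          ≤ 2 * σ⁻¹ * M₂) := by
  constructor
  · -- first estimate
    intro y hy j
    have h := congrFun (hψinv y hy) j
    simp only [Pi.add_apply] at h
    have : ψ y j - y j = -(v (ψ y) j) := by linear_combination h
    rw [this, norm_neg]
    exact hM₁ _ (hψmap y hy) j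
  · -- Jacobian estimate
    intro hsmall y hy i j
    have hy' : y ∈ strip n s := fun k => (hy k).le
    set z₀ := ψ y with hz₀def
    have hz₀ : z₀ ∈ strip n (s + σ) := hψmap y hy'
    have hz₀o : z₀ ∈ ostrip n (s + 2 * σ) := fun k =>
      lt_of_le_of_lt (hz₀ k) (by linarith)
    have hM₂0 : 0 ≤ M₂ :=
      le_trans (norm_nonneg _) (hM₂ z₀ (fun k => (hz₀o k).le) j)
    have hvd : DifferentiableAt ℂ v z₀ :=
      hv₂.differentiableAt ((isOpen_ostrip n _).mem_nhds hz₀o)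
    set A := fderiv ℂ ψ y with hA
    set B := fderiv ℂ v z₀ with hB
    -- the identity A + B ∘ A = id
    have hAB : ∀ x : Fin n → ℂ, A x + B (A x) = x := by
      have h1 : HasFDerivAt (fun y => ψ y + v (ψ y)) (A + B.comp A) y :=
        (hψdiff y hy).hasFDerivAt.add (hvd.hasFDerivAt.comp y (hψdiff y hy).hasFDerivAt)
      have heq : (fun y => ψ y + v (ψ y)) =ᶠ[nhds y] id := by
        filter_upwards [(isOpen_ostrip n s).mem_nhds hy] with x hx
        exact hψinv x (fun k => (hx k).le)
      have h2 : HasFDerivAt (id : (Fin n → ℂ) → (Fin n → ℂ)) (A + B.comp A) y :=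
        h1.congr_of_eventuallyEq heq.symm
      have h3 : A + B.comp A = ContinuousLinearMap.id ℂ (Fin n → ℂ) :=
        h2.unique (hasFDerivAt_id y)
      intro x
      have := congrFun (congrArg (fun (L : (Fin n → ℂ) →L[ℂ] (Fin n → ℂ)) => L x) h3) i
      -- easier: apply h3 to x directly
      have h4 := congrArg (fun (L : (Fin n → ℂ) →L[ℂ] (Fin n → ℂ)) => L x) h3
      simpa using h4
    set e : Fin n → ℂ := Pi.single j 1 with he
    set w : Fin n → ℂ := A e - e with hw
    have hAe : A e = w + e := by rw [hw]; abel
    have hwid : ∀ k, w k = -(B w k) - B e k := by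
      intro k
      have h := hAB e
      rw [hAe, map_add] at h
      have h' := congrFun h k
      simp only [Pi.add_apply] at h'
      linear_combination h'
    have hed : ∀ k, ‖e k‖ ≤ 1 := by
      intro k
      rw [he, Pi.single_apply]
      split <;> simp
    have hBe : ∀ k, ‖B e k‖ ≤ M₂ / σ :=
      fun k => cauchy_dir n s σ M₂ hσ v hv₂ hM₂ z₀ hz₀ e hed k
    have hBw : ∀ k, ‖B w k‖ ≤ ‖w‖ * (M₂ / σ) := by
      intro k
      rcases eq_or_lt_of_le (norm_nonneg w) with h0 | h0
      · have : w = 0 := by rw [← norm_eq_zero]; exact h0.symm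
        rw [this, map_zero]
        simp [← h0]
      · set c : ℝ := ‖w‖ with hc
        have hcne : (c : ℂ) ≠ 0 := by
          simp only [Ne, Complex.ofReal_eq_zero]; exact h0.ne'
        set u : Fin n → ℂ := (c : ℂ)⁻¹ • w with hu
        have hud : ∀ m, ‖u m‖ ≤ 1 := by
          intro m
          rw [hu]
          simp only [Pi.smul_apply, norm_smul, norm_inv, Complex.norm_real,
            Real.norm_eq_abs, abs_of_pos h0]
          rw [inv_mul_le_iff₀ h0, mul_one]
          exact norm_le_pi_norm w m
        have hwu : w = (c : ℂ) • u := by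
          rw [hu, smul_inv_smul₀ hcne]
        have hBu := cauchy_dir n s σ M₂ hσ v hv₂ hM₂ z₀ hz₀ u hud k
        rw [hwu, map_smul]
        simp only [Pi.smul_apply, norm_smul, Complex.norm_real, Real.norm_eq_abs,
          abs_of_pos h0]
        exact mul_le_mul_of_nonneg_left hBu h0.le
    have hβ : M₂ / σ ≤ 1 / 2 := by
      rw [div_le_div_iff₀ hσ (by norm_num)]
      have hinv : σ⁻¹ * σ = 1 := inv_mul_cancel₀ hσ.ne'
      nlinarith [mul_le_mul_of_nonneg_right hsmall hσ.le, hinv]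
    have hwk : ∀ k, ‖w k‖ ≤ ‖w‖ * (M₂ / σ) + M₂ / σ := by
      intro k
      rw [hwid k]
      calc ‖-(B w k) - B e k‖ ≤ ‖-(B w k)‖ + ‖B e k‖ := norm_sub_le _ _
        _ ≤ ‖w‖ * (M₂ / σ) + M₂ / σ := by
          rw [norm_neg]; exact add_le_add (hBw k) (hBe k)
    have hwnorm : ‖w‖ ≤ ‖w‖ * (M₂ / σ) + M₂ / σ := by
      refine pi_norm_le_iff_of_nonneg ?_ |>.mpr hwk
      positivity
    have hwfin : ‖w‖ ≤ 2 * σ⁻¹ * M₂ := by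
      have hβ0 : 0 ≤ M₂ / σ := by positivity
      have h2 : 2 * σ⁻¹ * M₂ = 2 * (M₂ / σ) := by
        rw [div_eq_inv_mul]; ring
      rw [h2]
      nlinarith [norm_nonneg w]
    have hgoal : fderiv ℂ ψ y (Pi.single j 1) i - (if i = j then (1 : ℂ) else 0) = w i := by
      rw [hw]
      simp only [Pi.sub_apply]
      congr 1
      rw [he, Pi.single_apply]
    rw [hgoal]
    exact le_trans (norm_le_pi_norm w i) hwfin
end
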